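/- Let m, n ≥ 2 be integers and let δ = gcd(m, n). Then the number of pairs of integers (i, j) with 1 ≤ i ≤ n − 1, 1 ≤ j ≤ m − 1 and −m·i + j·n − δ ≥ 0 is equal to ((m − 1)(n − 1) + 1 − δ)/2. -/

import Mathlib

/-- Let `m, n ≥ 2` be integers and `δ = gcd(m, n)`. Then the number of
pairs of integers `(i, j)` with `1 ≤ i ≤ n − 1`, `1 ≤ j ≤ m − 1` and `−m·i + j·n − δ ≥ 0`
equals `((m − 1)(n − 1) + 1 − δ)/2` (the genus of the superelliptic curve `y^m = f(x)` with
`f` separable of degree `n`). -/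
theorem superelliptic_differential_count (m n : ℤ) (hm : 2 ≤ m) (hn : 2 ≤ n)
    (δ : ℤ) (hδ : δ = Int.gcd m n) :
    (Set.ncard {p : ℤ × ℤ | 1 ≤ p.1 ∧ p.1 ≤ n - 1 ∧ 1 ≤ p.2 ∧ p.2 ≤ m - 1 ∧
        0 ≤ -(m * p.1) + p.2 * n - δ} : ℚ) =
      (((m : ℚ) - 1) * ((n : ℚ) - 1) + 1 - (δ : ℚ)) / 2 := by
  have hδpos : 0 < δ := by
    rw [hδ]
    exact_mod_cast Int.gcd_pos_of_ne_zero_left n (by omega)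
  have hδm : δ ∣ m := hδ ▸ Int.gcd_dvd_left m n
  have hδn : δ ∣ n := hδ ▸ Int.gcd_dvd_right m n
  -- divisibility of the form
  have hdvd : ∀ p : ℤ × ℤ, δ ∣ p.2 * n - m * p.1 := fun p =>
    dvd_sub (Dvd.dvd.mul_left hδn _) (Dvd.dvd.mul_right hδm _)
  set F : Finset (ℤ × ℤ) := Finset.Icc 1 (n-1) ×ˢ Finset.Icc 1 (m-1) with hF
  set P : Finset (ℤ × ℤ) := F.filter (fun p => 0 < p.2 * n - m * p.1) with hP
  set N : Finset (ℤ × ℤ) := F.filter (fun p => p.2 * n - m * p.1 < 0) with hN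
  set Z : Finset (ℤ × ℤ) := F.filter (fun p => p.2 * n - m * p.1 = 0) with hZ
  -- the set equals ↑P
  have hset : {p : ℤ × ℤ | 1 ≤ p.1 ∧ p.1 ≤ n - 1 ∧ 1 ≤ p.2 ∧ p.2 ≤ m - 1 ∧
      0 ≤ -(m * p.1) + p.2 * n - δ} = (P : Set (ℤ × ℤ)) := by
    ext p
    simp only [hP, hF, Set.mem_setOf_eq, Finset.coe_filter, Finset.mem_product,
      Finset.mem_Icc, Set.mem_setOf_eq]
    constructor
    · rintro ⟨h1, h2, h3, h4, h5⟩
      exact ⟨⟨⟨h1, h2⟩, h3, h4⟩, by omega⟩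
    · rintro ⟨⟨⟨h1, h2⟩, h3, h4⟩, h5⟩
      have := Int.le_of_dvd h5 (hdvd p)
      exact ⟨h1, h2, h3, h4, by omega⟩
  rw [hset, Set.ncard_coe_finset]
  -- cardinality of F
  have hFcard : (F.card : ℤ) = (n - 1) * (m - 1) := by
    rw [hF, Finset.card_product, Int.card_Icc, Int.card_Icc]
    push_cast [Int.toNat_of_nonneg (by omega : (0:ℤ) ≤ n - 1 + 1 - 1),
      Int.toNat_of_nonneg (by omega : (0:ℤ) ≤ m - 1 + 1 - 1)]
    ring
  -- P and N have the same cardinality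
  have hPN : P.card = N.card := by
    apply Finset.card_bij (fun p _ => (n - p.1, m - p.2))
    · rintro ⟨i, j⟩ hij
      simp only [hP, hN, hF, Finset.mem_filter, Finset.mem_product, Finset.mem_Icc] at hij ⊢
      obtain ⟨⟨⟨h1, h2⟩, h3, h4⟩, h5⟩ := hij
      refine ⟨⟨⟨by omega, by omega⟩, by omega, by omega⟩, by nlinarith⟩
    · rintro ⟨i, j⟩ _ ⟨i', j'⟩ _ h
      simp only [Prod.mk.injEq] at h
      have : i = i' ∧ j = j' := by omega
      simp only [Prod.mk.injEq]
      exact this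
    · rintro ⟨i, j⟩ hij
      simp only [hP, hN, hF, Finset.mem_filter, Finset.mem_product, Finset.mem_Icc] at hij
      obtain ⟨⟨⟨h1, h2⟩, h3, h4⟩, h5⟩ := hij
      refine ⟨(n - i, m - j), ?_, by simp only [Prod.mk.injEq]; omega⟩
      simp only [hP, hF, Finset.mem_filter, Finset.mem_product, Finset.mem_Icc]
      exact ⟨⟨⟨by omega, by omega⟩, by omega, by omega⟩, by nlinarith⟩
  -- Z has cardinality δ - 1
  have hZcard : (Z.card : ℤ) = δ - 1 := by
    obtain ⟨m', hm'⟩ := hδm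
    obtain ⟨n', hn'⟩ := hδn
    have hn'pos : 0 < n' := by nlinarith
    have hm'pos : 0 < m' := by nlinarith
    have hcop : Int.gcd n' m' = 1 := by
      have hgpos : 0 < Int.gcd m n := Int.gcd_pos_of_ne_zero_left n (by omega)
      have h := Int.gcd_div_gcd_div_gcd (i := m) (j := n) hgpos
      rw [← hδ] at h
      have hm'' : m / δ = m' := by rw [hm']; exact Int.mul_ediv_cancel_left _ (by omega)
      have hn'' : n / δ = n' := by rw [hn']; exact Int.mul_ediv_cancel_left _ (by omega)
      rw [hm'', hn''] at h
      rwa [Int.gcd_comm]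
    have hbij : (Finset.Icc (1:ℤ) (δ - 1)).card = Z.card := by
      apply Finset.card_bij (fun k _ => (k * n', k * m'))
      · intro k hk
        simp only [Finset.mem_Icc] at hk
        simp only [hZ, hF, Finset.mem_filter, Finset.mem_product, Finset.mem_Icc]
        refine ⟨⟨⟨by nlinarith, by nlinarith⟩, by nlinarith, by nlinarith⟩, by
          rw [hm', hn']; ring⟩
      · intro k _ k' _ h
        simp only [Prod.mk.injEq] at h
        nlinarith [h.1]
      · rintro ⟨i, j⟩ hij
        simp only [hZ, hF, Finset.mem_filter, Finset.mem_product, Finset.mem_Icc] at hij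
        obtain ⟨⟨⟨h1, h2⟩, h3, h4⟩, h5⟩ := hij
        -- j * n = m * i, so j * n' = m' * i
        have he : j * n' = m' * i := by
          have : δ * (j * n') = δ * (m' * i) := by
            have := h5
            rw [hm', hn'] at this
            ring_nf at this ⊢
            linarith
          exact mul_left_cancel₀ (by omega) this
        have hdvd' : n' ∣ i := by
          have : n' ∣ m' * i := ⟨j, by linarith [he]⟩
          exact Int.dvd_of_dvd_mul_right_of_gcd_one this hcop
        obtain ⟨k, hk⟩ := hdvd'
        have hj : j = k * m' := by
          have : n' * j = n' * (k * m') := by rw [← mul_comm j n', he, hk]; ring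
          exact mul_left_cancel₀ (by omega) this
        refine ⟨k, ?_, by simp only [Prod.mk.injEq]; exact ⟨by rw [hk]; ring, by rw [hj]⟩⟩
        simp only [Finset.mem_Icc]
        constructor
        · nlinarith [hk ▸ h1]
        · nlinarith [hk ▸ h2, hn' ▸ h2]
    have : (Finset.Icc (1:ℤ) (δ-1)).card = (δ - 1).toNat := by
      rw [Int.card_Icc]; congr 1; omega
    rw [← hbij, this, Int.toNat_of_nonneg (by omega)]
  -- partition
  have hsplit : F.card = P.card + N.card + Z.card := by
    have h1 : F.filter (fun p => ¬ 0 < p.2 * n - m * p.1) = N ∪ Z := by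
      ext p
      simp only [hN, hZ, Finset.mem_filter, Finset.mem_union, not_lt]
      constructor
      · rintro ⟨hp, h⟩
        rcases lt_or_eq_of_le h with h' | h'
        · exact Or.inl ⟨hp, h'⟩
        · exact Or.inr ⟨hp, h'⟩
      · rintro (⟨hp, h⟩ | ⟨hp, h⟩) <;> exact ⟨hp, by omega⟩
    have h2 : Disjoint N Z := by
      rw [Finset.disjoint_filter]
      intro p _ h
      omega
    have h3 := Finset.card_filter_add_card_filter_not
      (s := F) (p := fun p => 0 < p.2 * n - m * p.1)
    rw [h1, Finset.card_union_of_disjoint h2] at h3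
    have hPe : (Finset.filter (fun p => 0 < p.2 * n - m * p.1) F) = P := by
      rw [hP]
    rw [hPe] at h3
    omega
  -- conclude
  have key : (P.card : ℤ) * 2 = (n - 1) * (m - 1) - (δ - 1) := by
    have : (F.card : ℤ) = P.card + N.card + Z.card := by exact_mod_cast hsplit
    rw [hFcard, hZcard] at *
    omega
  have : (P.card : ℚ) * 2 = ((n : ℚ) - 1) * ((m : ℚ) - 1) - ((δ : ℚ) - 1) := by
    exact_mod_cast congrArg (fun x : ℤ => (x : ℚ)) key
  push_cast at this ⊢
  linarith
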